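/- Let X be a quasigeodesic metric space of bounded geometry (for example, a connected graph whose vertex degrees are uniformly bounded, with its path metric). Then: (i) if lim_{l→∞} (1/l) log (sup_{x∈X} |B(x,l)|) = 0, then h_∞(X) = 0; (ii) if limsup_{l→∞} (1/l) log (sup_{x∈X} |B(x,l)|) > 0, then h_∞(X) = ∞. -/

import Mathlib

open Filter Set Metric
open scoped ENNReal

noncomputable section

/-- `p` represents a `δ`-pseudoorbit of `f` of length `n` starting at `x₀`:
`(p 0, p 1, …, p n)` with `p 0 = x₀` and `dist (f (p i)) (p (i+1)) ≤ δ` for `i < n`.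
(Only the values `p 0, …, p n` are relevant.) -/
def IsPseudoOrbit {X : Type*} [MetricSpace X] (f : X → X) (δ : ℝ) (n : ℕ) (x₀ : X)
    (p : ℕ → X) : Prop :=
  p 0 = x₀ ∧ ∀ i < n, dist (f (p i)) (p (i + 1)) ≤ δ

/-- The distance between two pseudoorbits of length `n`:
the maximum of `dist (p i) (q i)` over `0 ≤ i ≤ n`. -/
def orbitDist {X : Type*} [MetricSpace X] (n : ℕ) (p q : ℕ → X) : ℝ :=
  (Finset.range (n + 1)).sup' (by simp) fun i => dist (p i) (q i)

/-- A family `S` of pseudoorbits of length `n` is `R`-separated if any two distinct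
members are at pseudoorbit distance at least `R`. -/
def IsSepFamily {X : Type*} [MetricSpace X] (n : ℕ) (R : ℝ) (S : Set (ℕ → X)) : Prop :=
  ∀ p ∈ S, ∀ q ∈ S, p ≠ q → R ≤ orbitDist n p q

/-- `sepCard f n R δ x₀` is `s(f,n,R,δ,x₀)`: the supremum of cardinalities of
`R`-separated sets of `δ`-pseudoorbits of `f` of length `n` starting at `x₀`. -/
def sepCard {X : Type*} [MetricSpace X] (f : X → X) (n : ℕ) (R δ : ℝ) (x₀ : X) : ℝ≥0∞ :=
  ⨆ (S : Set (ℕ → X)) (_ : ∀ p ∈ S, IsPseudoOrbit f δ n x₀ p) (_ : IsSepFamily n R S),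
    (S.encard : ℝ≥0∞)

/-- Extended logarithm `[0,∞] → [0,∞]` (negative values are truncated to `0`). -/
def elog (x : ℝ≥0∞) : ℝ≥0∞ :=
  if x = ⊤ then ⊤ else ENNReal.ofReal (Real.log x.toReal)

/-- The coarse entropy of `f : X → X` computed at the basepoint `x₀`:
`h_∞(f) = lim_{δ→∞} lim_{R→∞} limsup_{n→∞} (1/n) log s(f,n,R,δ,x₀)`.
Since `s` is nondecreasing in `δ` and nonincreasing in `R`, the limits in `δ` and `R`
are the supremum over `δ > 0` and the infimum over `R > 0`, respectively. -/
def coarseEntropyAt {X : Type*} [MetricSpace X] (f : X → X) (x₀ : X) : ℝ≥0∞ :=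
  ⨆ (δ : ℝ) (_ : 0 < δ), ⨅ (R : ℝ) (_ : 0 < R),
    Filter.atTop.limsup fun n : ℕ => elog (sepCard f n R δ x₀) / (n : ℝ≥0∞)

end

/-- A metric space `X` is quasigeodesic. -/
def IsQuasiGeodesicSpace (X : Type*) [MetricSpace X] : Prop :=
  ∃ C A : ℝ, 1 ≤ C ∧ 0 ≤ A ∧ ∀ x x' : X, ∃ p : ℝ → X,
    p 0 = x ∧ p (dist x x') = x' ∧
    ∀ s ∈ Set.Icc (0 : ℝ) (dist x x'), ∀ t ∈ Set.Icc (0 : ℝ) (dist x x'),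
      C⁻¹ * |s - t| - A ≤ dist (p s) (p t) ∧ dist (p s) (p t) ≤ C * |s - t| + A

/-- A metric space has bounded geometry if for every radius `r > 0` there is a uniform
bound `C(r) ∈ ℕ` on the cardinalities of closed balls of radius `r`. -/
def HasBoundedGeometry (X : Type*) [MetricSpace X] : Prop :=
  ∀ r : ℝ, 0 < r → ∃ C : ℕ, ∀ x : X, (Metric.closedBall x r).encard ≤ C

section Aux

lemma elog_mono : Monotone elog := by
  intro x y hxy
  unfold elog
  rcases eq_or_ne y ⊤ with hy | hy
  · simp [hy]
  · have hx : x ≠ ⊤ := fun h => hy (top_le_iff.mp (h ▸ hxy))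
    simp only [hx, hy, if_false]
    rcases eq_or_ne x 0 with h0 | h0
    · simp [h0]
    · apply ENNReal.ofReal_le_ofReal
      apply Real.log_le_log (ENNReal.toReal_pos h0 hx)
      exact ENNReal.toReal_mono hy hxy

lemma elog_natpow (M k : ℕ) : elog ((M : ℝ≥0∞) ^ k) = ENNReal.ofReal (k * Real.log M) := by
  unfold elog
  have h1 : ((M : ℝ≥0∞) ^ k) ≠ ⊤ := by
    exact ENNReal.pow_ne_top (ENNReal.natCast_ne_top M)
  simp only [h1, if_false]
  congr 1
  rw [ENNReal.toReal_pow]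
  simp [Real.log_pow]

lemma encard_depProd_le {α β : Type*} (T : Set α) (G : α → Set β) (C : ℕ)
    (hG : ∀ a ∈ T, (G a).encard ≤ C) :
    {z : α × β | z.1 ∈ T ∧ z.2 ∈ G z.1}.encard ≤ T.encard * C := by
  classical
  rcases T.finite_or_infinite with hT | hT
  · have key : ∀ s : Set α, s.Finite → (∀ a ∈ s, (G a).encard ≤ C) →
        {z : α × β | z.1 ∈ s ∧ z.2 ∈ G z.1}.encard ≤ s.encard * C := by
      intro s hs
      refine Set.Finite.induction_on s hs (by intro _; simp) ?_
      intro a s has hsf ih hG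
      have hsub : {z : α × β | z.1 ∈ insert a s ∧ z.2 ∈ G z.1} ⊆
          (Prod.mk a '' G a) ∪ {z : α × β | z.1 ∈ s ∧ z.2 ∈ G z.1} := by
        rintro ⟨u, v⟩ ⟨hu, hv⟩
        rcases hu with rfl | hu
        · exact Or.inl ⟨v, hv, rfl⟩
        · exact Or.inr ⟨hu, hv⟩
      have hinj : Function.Injective (Prod.mk a : β → α × β) := fun x y h => by
        simpa using congrArg Prod.snd h
      calc {z : α × β | z.1 ∈ insert a s ∧ z.2 ∈ G z.1}.encard
          ≤ ((Prod.mk a '' G a) ∪ {z : α × β | z.1 ∈ s ∧ z.2 ∈ G z.1}).encard :=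
            Set.encard_le_encard hsub
        _ ≤ (Prod.mk a '' G a).encard + {z : α × β | z.1 ∈ s ∧ z.2 ∈ G z.1}.encard :=
            Set.encard_union_le _ _
        _ ≤ C + s.encard * C := by
            gcongr
            · rw [hinj.encard_image]
              exact hG a (Set.mem_insert a s)
            · exact ih fun x hx => hG x (Set.mem_insert_of_mem a hx)
        _ = (insert a s).encard * C := by
            rw [Set.encard_insert_of_notMem has, add_mul, one_mul, add_comm]
    exact key T hT hG
  · rcases Nat.eq_zero_or_pos C with hC | hC
    · subst hC
      have : {z : α × β | z.1 ∈ T ∧ z.2 ∈ G z.1} = ∅ := by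
        ext ⟨u, v⟩
        simp only [Set.mem_setOf_eq, Set.mem_empty_iff_false, iff_false, not_and]
        intro hu hv
        have h0 : (G u).encard = 0 := le_antisymm (by simpa using hG u hu) (zero_le)
        rw [Set.encard_eq_zero] at h0
        rw [h0] at hv
        exact hv
      simp [this]
    · rw [hT.encard_eq]
      rw [ENat.top_mul (by exact_mod_cast hC.ne')]
      exact le_top

lemma chain_upper {X : Type*} (x₀ : X) (F : X → Set X) (C : ℕ) (hF : ∀ x, (F x).encard ≤ C) :
    ∀ k : ℕ, {g : ℕ → X | g 0 = x₀ ∧ (∀ j < k, g (j+1) ∈ F (g j)) ∧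
      ∀ j, k ≤ j → g (j+1) = g j}.encard ≤ (C : ℕ∞) ^ k := by
  intro k
  induction k with
  | zero =>
    rw [pow_zero]
    rw [Set.encard_le_one_iff]
    rintro g g' ⟨hg0, -, hgc⟩ ⟨hg'0, -, hg'c⟩
    have hconst : ∀ h : ℕ → X, h 0 = x₀ → (∀ j, 0 ≤ j → h (j+1) = h j) → ∀ j, h j = x₀ := by
      intro h h0 hc j
      induction j with
      | zero => exact h0
      | succ n ih => rw [hc n (Nat.zero_le n)]; exact ih
    funext j
    rw [hconst g hg0 hgc j, hconst g' hg'0 hg'c j]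
  | succ k ih =>
    set Tk := {g : ℕ → X | g 0 = x₀ ∧ (∀ j < k, g (j+1) ∈ F (g j)) ∧
      ∀ j, k ≤ j → g (j+1) = g j} with hTk
    set Tk1 := {g : ℕ → X | g 0 = x₀ ∧ (∀ j < k + 1, g (j+1) ∈ F (g j)) ∧
      ∀ j, k + 1 ≤ j → g (j+1) = g j} with hTk1
    classical
    set φ : (ℕ → X) → (ℕ → X) × X := fun g => ((fun j => if j ≤ k then g j else g k), g (k+1))
      with hφ
    -- tail constancy
    have htail : ∀ g ∈ Tk1, ∀ j, k + 1 ≤ j → g j = g (k+1) := by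
      rintro g ⟨-, -, hgc⟩ j hj
      induction j, hj using Nat.le_induction with
      | base => rfl
      | succ n hn ihn => rw [hgc n hn]; exact ihn
    have hinj : Set.InjOn φ Tk1 := by
      intro g hg g' hg' heq
      have h1 := congrArg Prod.fst heq
      have h2 := congrArg Prod.snd heq
      simp only [hφ] at h1 h2
      funext j
      rcases le_or_gt j k with hj | hj
      · have := congrFun h1 j
        simpa [hj] using this
      · have hj' : k + 1 ≤ j := hj
        rw [htail g hg j hj', htail g' hg' j hj', h2]
    have himg : φ '' Tk1 ⊆ {z : (ℕ → X) × X | z.1 ∈ Tk ∧ z.2 ∈ F (z.1 k)} := by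
      rintro z ⟨g, hg, rfl⟩
      obtain ⟨hg0, hgF, hgc⟩ := hg
      constructor
      · refine ⟨by simp [hφ, hg0], ?_, ?_⟩
        · intro j hj
          have hj1 : j + 1 ≤ k := hj
          simp only [hφ, hj1, if_pos, hj.le]
          simpa [hj1, hj.le] using hgF j (Nat.lt_succ_of_lt hj)
        · intro j hj
          rcases eq_or_lt_of_le hj with rfl | hjy
          · simp [hφ]
          · have : ¬ (j + 1 ≤ k) := by omega
            have : ¬ (j ≤ k) := by omega
            simp only [hφ]
            rw [if_neg (by omega : ¬ (j + 1 ≤ k)), if_neg (by omega : ¬ (j ≤ k))]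
      · simp only [hφ, le_refl, if_pos]
        exact hgF k (Nat.lt_succ_self k)
    calc Tk1.encard = (φ '' Tk1).encard := (hinj.encard_image).symm
      _ ≤ {z : (ℕ → X) × X | z.1 ∈ Tk ∧ z.2 ∈ F (z.1 k)}.encard := Set.encard_le_encard himg
      _ ≤ Tk.encard * C := encard_depProd_le Tk (fun h => F (h k)) C (fun a _ => hF (a k))
      _ ≤ (C : ℕ∞) ^ k * C := by gcongr
      _ = (C : ℕ∞) ^ (k + 1) := (pow_succ _ _).symm

end Aux

lemma encard_prod_of_finite {α β : Type*} {s : Set α} {t : Set β}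
    (hs : s.Finite) (ht : t.Finite) : (s ×ˢ t).encard = s.encard * t.encard := by
  classical
  rw [hs.encard_eq_coe_toFinset_card, ht.encard_eq_coe_toFinset_card,
    (hs.prod ht).encard_eq_coe_toFinset_card, ← Set.Finite.toFinset_prod hs ht,
    Finset.card_product]
  exact_mod_cast Nat.cast_mul _ _

lemma chain_lower {X : Type*} (D : Set X) (hD : D.Finite) (d₀ : X) :
    ∀ k : ℕ, {g : ℕ → X | (∀ j < k, g j ∈ D) ∧ ∀ j, k ≤ j → g j = d₀}.Finite ∧
      {g : ℕ → X | (∀ j < k, g j ∈ D) ∧ ∀ j, k ≤ j → g j = d₀}.encard = D.encard ^ k := by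
  intro k
  induction k with
  | zero =>
    have : {g : ℕ → X | (∀ j < 0, g j ∈ D) ∧ ∀ j, 0 ≤ j → g j = d₀} = {fun _ => d₀} := by
      ext g
      simp only [Set.mem_setOf_eq, Set.mem_singleton_iff]
      constructor
      · rintro ⟨-, h⟩; funext j; exact h j (Nat.zero_le j)
      · rintro rfl; exact ⟨fun j hj => absurd hj (Nat.not_lt_zero j), fun j _ => rfl⟩
    rw [this]
    exact ⟨Set.finite_singleton _, by simp⟩
  | succ k ih =>
    obtain ⟨ihf, ihe⟩ := ih
    classical
    set Yk := {g : ℕ → X | (∀ j < k, g j ∈ D) ∧ ∀ j, k ≤ j → g j = d₀} with hYk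
    set Yk1 := {g : ℕ → X | (∀ j < k + 1, g j ∈ D) ∧ ∀ j, k + 1 ≤ j → g j = d₀} with hYk1
    set ψ : (ℕ → X) × X → (ℕ → X) :=
      fun z => fun j => if j < k then z.1 j else if j = k then z.2 else d₀ with hψ
    have himg : ψ '' (Yk ×ˢ D) = Yk1 := by
      apply Set.Subset.antisymm
      · rintro g ⟨⟨h, y⟩, ⟨⟨hh1, hh2⟩, hy⟩, rfl⟩
        constructor
        · intro j hj
          rcases lt_or_ge j k with hjk | hjk
          · simpa [hψ, hjk] using hh1 j hjk
          · have hjk' : j = k := by omega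
            simp [hψ, hjk', hy]
        · intro j hj
          have h1 : ¬ j < k := by omega
          have h2 : j ≠ k := by omega
          simp [hψ, h1, h2]
      · intro g ⟨hg1, hg2⟩
        refine ⟨((fun j => if j < k then g j else d₀), g k), ⟨⟨?_, ?_⟩, hg1 k (Nat.lt_succ_self k)⟩, ?_⟩
        · intro j hj; simp only [hj, if_pos]; exact hg1 j (Nat.lt_succ_of_lt hj)
        · intro j hj; simp [Nat.not_lt_of_ge hj]
        · funext j
          rcases lt_or_ge j k with hjk | hjk
          · simp [hψ, hjk]
          · rcases eq_or_lt_of_le hjk with rfl | hjk'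
            · simp [hψ]
            · have h1 : ¬ j < k := by omega
              have h2 : j ≠ k := by omega
              have h3 : k + 1 ≤ j := by omega
              simp [hψ, h1, h2, hg2 j h3]
    have hinj : Set.InjOn ψ (Yk ×ˢ D) := by
      rintro ⟨h, y⟩ ⟨⟨hh1, hh2⟩, hy⟩ ⟨h', y'⟩ ⟨⟨hh1', hh2'⟩, hy'⟩ heq
      have hyy : y = y' := by
        have := congrFun heq k
        simpa [hψ] using this
      have hhh : h = h' := by
        funext j
        rcases lt_or_ge j k with hjk | hjk
        · have := congrFun heq j
          simpa [hψ, hjk] using this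
        · rw [show h j = (h, y).1 j from rfl, hh2 j hjk,
            show h' j = (h', y').1 j from rfl, hh2' j hjk]
      rw [hyy, hhh]
    have hfin : Yk1.Finite := by
      rw [← himg]; exact (ihf.prod hD).image ψ
    refine ⟨hfin, ?_⟩
    rw [← himg, hinj.encard_image, encard_prod_of_finite ihf hD, ihe, pow_succ]

lemma dist_le_of_pseudo {X : Type*} [MetricSpace X] {δ : ℝ} {n : ℕ} {x₀ : X} {p : ℕ → X}
    (hp : IsPseudoOrbit (id : X → X) δ n x₀ p) :
    ∀ a b, a ≤ b → b ≤ n → dist (p a) (p b) ≤ ((b - a : ℕ) : ℝ) * δ := by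
  intro a b hab hbn
  induction b, hab using Nat.le_induction with
  | base => simp
  | succ b hb ihb =>
    have hbn' : b ≤ n := by omega
    calc dist (p a) (p (b + 1)) ≤ dist (p a) (p b) + dist (p b) (p (b + 1)) := dist_triangle _ _ _
      _ ≤ ((b - a : ℕ) : ℝ) * δ + δ := by
          refine add_le_add (ihb hbn') ?_
          simpa using hp.2 b (by omega)
      _ ≤ ((b + 1 - a : ℕ) : ℝ) * δ := by
          have h : b + 1 - a = (b - a) + 1 := by omega
          rw [h]
          push_cast
          rw [add_mul, one_mul]

lemma exists_stepPath {X : Type*} [MetricSpace X] {C A : ℝ} (hC : 1 ≤ C) (hA : 0 ≤ A)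
    (u v : X)
    (hp : ∃ p : ℝ → X, p 0 = u ∧ p (dist u v) = v ∧
      ∀ s ∈ Set.Icc (0 : ℝ) (dist u v), ∀ t ∈ Set.Icc (0 : ℝ) (dist u v),
        C⁻¹ * |s - t| - A ≤ dist (p s) (p t) ∧ dist (p s) (p t) ≤ C * |s - t| + A)
    (T : ℕ) (hT : 1 ≤ T) :
    ∃ q : ℕ → X, q 0 = u ∧ (∀ i, dist (q i) (q (i + 1)) ≤ T * (C + A)) ∧
      ∀ i, ⌈dist u v / T⌉₊ ≤ i → q i = v := by
  set d := dist u v with hd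
  have hd0 : 0 ≤ d := dist_nonneg
  set N := ⌈d / T⌉₊ with hN
  rcases Nat.eq_zero_or_pos N with hN0 | hNpos
  · -- d = 0, u = v
    have hT0 : (0 : ℝ) < T := by exact_mod_cast hT
    have hdT : d / T ≤ 0 := by
      have := Nat.ceil_eq_zero.mp hN0
      linarith [this]
    have hd00 : d = 0 := by
      have h1 : (d / T) * T ≤ 0 * T := mul_le_mul_of_nonneg_right hdT hT0.le
      have hdd : (d / T) * T = d := by field_simp
      rw [hdd, zero_mul] at h1
      linarith
    have huv : u = v := by rwa [hd, dist_eq_zero] at hd00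
    refine ⟨fun _ => u, rfl, ?_, ?_⟩
    · intro i
      have : (0:ℝ) ≤ T * (C + A) := by positivity
      simpa using this
    · intro i _
      exact huv
  · obtain ⟨p, hp0, hpd, hpq⟩ := hp
    have hT0 : (0 : ℝ) < T := by exact_mod_cast hT
    have hNr : (0 : ℝ) < N := by exact_mod_cast hNpos
    have hdN : d ≤ T * N := by
      have h1 : d / T ≤ N := Nat.le_ceil _
      calc d = T * (d / T) := by field_simp
        _ ≤ T * N := by nlinarith
    have hstep : d / N ≤ T := by
      rw [div_le_iff₀ hNr]; linarith [hdN, mul_comm (T:ℝ) (N:ℝ)]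
    set q : ℕ → X := fun i => p (min (i * (d / N)) d) with hq
    have hmem : ∀ i : ℕ, min (i * (d / N)) d ∈ Set.Icc (0 : ℝ) d := by
      intro i
      constructor
      · apply le_min _ hd0
        positivity
      · exact min_le_right _ _
    refine ⟨q, ?_, ?_, ?_⟩
    · simp only [hq]
      rw [show min ((0 : ℕ) * (d / N)) d = 0 by simp [hd0]]
      exact hp0
    · intro i
      have h1 : min ((i : ℝ) * (d / N)) d ≤ min (((i : ℕ) + 1 : ℕ) * (d / N)) d := by
        apply min_le_min _ le_rfl
        have : (0:ℝ) ≤ d / N := by positivity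
        push_cast
        nlinarith
      have h2 : min ((((i : ℕ) + 1 : ℕ) : ℝ) * (d / N)) d ≤ min ((i : ℝ) * (d / N)) d + d / N := by
        have hq0 : (0:ℝ) ≤ d / N := by positivity
        rcases le_total ((i : ℝ) * (d / N)) d with h | h
        · rw [min_eq_left h]
          push_cast
          calc min (((i:ℝ) + 1) * (d / N)) d ≤ ((i:ℝ) + 1) * (d / N) := min_le_left _ _
            _ = (i : ℝ) * (d / N) + d / N := by ring
        · rw [min_eq_right h]
          calc min ((((i : ℕ) + 1 : ℕ) : ℝ) * (d / N)) d ≤ d := min_le_right _ _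
            _ ≤ d + d / N := by linarith
      have habs : |min ((i : ℝ) * (d / N)) d - min (((i : ℕ) + 1 : ℕ) * (d / N)) d| ≤ d / N := by
        rw [abs_sub_comm, abs_of_nonneg (by push_cast at h1 ⊢; linarith)]
        push_cast at h2 ⊢
        linarith
      have := (hpq _ (hmem i) _ (hmem (i + 1))).2
      calc dist (q i) (q (i + 1)) ≤ C * |min ((i : ℝ) * (d / N)) d - min (((i + 1 : ℕ) : ℝ) * (d / N)) d| + A := by
            simpa [hq] using this
        _ ≤ C * (d / N) + A := by
            have hC0 : (0:ℝ) < C := lt_of_lt_of_le one_pos hC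
            have := habs
            push_cast at this ⊢
            nlinarith
        _ ≤ T * (C + A) := by
            have hC0 : (0:ℝ) < C := lt_of_lt_of_le one_pos hC
            have h3 : C * (d / N) ≤ C * T := by nlinarith
            have hT1 : (1:ℝ) ≤ T := by exact_mod_cast hT
            have h4 : A ≤ T * A := by nlinarith
            nlinarith
    · intro i hi
      have hi' : (N : ℝ) ≤ i := by exact_mod_cast hi
      have : d ≤ (i : ℝ) * (d / N) := by
        have : (N : ℝ) * (d / N) = d := by field_simp
        nlinarith [div_nonneg hd0 (le_of_lt hNr)]
      simp only [hq]
      rw [min_eq_right this]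
      exact hpd

lemma exists_net {X : Type*} [MetricSpace X] (A : Set X) (hA : A.Finite) (R : ℝ) (hR : 0 < R) :
    ∃ D : Set X, D ⊆ A ∧ D.Finite ∧ (∀ y ∈ D, ∀ z ∈ D, y ≠ z → R ≤ dist y z) ∧
      ∀ a ∈ A, ∃ y ∈ D, dist a y ≤ R := by
  classical
  set 𝒮 : Finset (Finset X) := hA.toFinset.powerset.filter
    (fun s => ∀ y ∈ s, ∀ z ∈ s, y ≠ z → R ≤ dist y z) with h𝒮
  have hne : 𝒮.Nonempty := by
    refine ⟨∅, ?_⟩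
    simp [h𝒮]
  obtain ⟨s, hs, hsmax⟩ := Finset.exists_max_image 𝒮 Finset.card hne
  simp only [h𝒮, Finset.mem_filter, Finset.mem_powerset] at hs
  obtain ⟨hsub, hsep⟩ := hs
  refine ⟨(s : Set X), ?_, s.finite_toSet, ?_, ?_⟩
  · intro y hy
    have := hsub hy
    simpa using this
  · intro y hy z hz hyz
    exact hsep y (by exact_mod_cast hy) z (by exact_mod_cast hz) hyz
  · intro a ha
    by_contra hcon
    push_neg at hcon
    have hanotin : a ∉ s := by
      intro hin
      have := hcon a (by exact_mod_cast hin)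
      simp at this
      linarith
    have hbig : insert a s ∈ 𝒮 := by
      simp only [h𝒮, Finset.mem_filter, Finset.mem_powerset]
      constructor
      · intro x hx
        rcases Finset.mem_insert.mp hx with rfl | hx
        · simpa using ha
        · exact hsub hx
      · intro y hy z hz hyz
        rcases Finset.mem_insert.mp hy with rfl | hy' <;>
          rcases Finset.mem_insert.mp hz with rfl | hz'
        · exact absurd rfl hyz
        · have := hcon z (by exact_mod_cast hz')
          linarith [this]
        · have := hcon y (by exact_mod_cast hy')
          rw [dist_comm]
          linarith [this]
        · exact hsep y hy' z hz' hyz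
    have := hsmax _ hbig
    rw [Finset.card_insert_of_notMem hanotin] at this
    omega

lemma sepCard_le {X : Type*} [MetricSpace X] (x₀ : X) (δ : ℝ) (hδ : 0 < δ) (m : ℕ)
    (hm : 1 ≤ m) (C' : ℕ)
    (hC' : ∀ x : X, (Metric.closedBall x (m * δ)).encard ≤ C') (n : ℕ) :
    sepCard (id : X → X) n (2 * m * δ + 1) δ x₀ ≤ (C' : ℝ≥0∞) ^ (n / m + 1) := by
  set K := n / m + 1 with hK
  rw [sepCard]
  refine iSup_le fun S => iSup_le fun h1 => iSup_le fun h2 => ?_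
  set Φ : (ℕ → X) → (ℕ → X) := fun p j => p (min (j * m) n) with hΦ
  have horb : ∀ p ∈ S, ∀ q ∈ S, Φ p = Φ q → orbitDist n p q ≤ 2 * m * δ := by
    intro p hp q hq heq
    apply Finset.sup'_le
    intro i hi
    have hin : i ≤ n := by
      simp only [Finset.mem_range] at hi; omega
    set w := (i / m) * m with hw
    have hwi : w ≤ i := Nat.div_mul_le_self i m
    have hwmin : min ((i / m) * m) n = w := min_eq_left (le_trans hwi hin)
    have hpq : p w = q w := by
      have := congrFun heq (i / m)
      simpa [hΦ, hwmin] using this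
    have hww : w = m * (i / m) := by rw [hw, Nat.mul_comm]
    have him : i - w < m := by
      have h3 : i < w + m := by
        rw [hww]
        have h1 := Nat.div_add_mod i m
        have h2 := Nat.mod_lt i hm
        omega
      omega
    have hd1 : dist (p w) (p i) ≤ ((i - w : ℕ) : ℝ) * δ :=
      dist_le_of_pseudo (h1 p hp) w i hwi hin
    have hd2 : dist (q w) (q i) ≤ ((i - w : ℕ) : ℝ) * δ :=
      dist_le_of_pseudo (h1 q hq) w i hwi hin
    have hcast : ((i - w : ℕ) : ℝ) ≤ (m : ℝ) := by exact_mod_cast him.le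
    have hmδ : ((i - w : ℕ) : ℝ) * δ ≤ (m : ℝ) * δ := by nlinarith
    calc dist (p i) (q i) ≤ dist (p i) (p w) + dist (p w) (q i) := dist_triangle _ _ _
      _ ≤ dist (p i) (p w) + (dist (q w) (q i)) := le_of_eq (by rw [hpq])
      _ ≤ (m : ℝ) * δ + (m : ℝ) * δ := by
          rw [dist_comm (p i) (p w)]
          exact add_le_add (le_trans hd1 hmδ) (le_trans hd2 hmδ)
      _ = 2 * m * δ := by ring
  have hinj : Set.InjOn Φ S := by
    intro p hp q hq heq
    by_contra hne
    have := h2 p hp q hq hne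
    have := horb p hp q hq heq
    linarith
  have himg : Φ '' S ⊆ {g : ℕ → X | g 0 = x₀ ∧
      (∀ j < K, g (j+1) ∈ Metric.closedBall (g j) (m * δ)) ∧ ∀ j, K ≤ j → g (j+1) = g j} := by
    rintro g ⟨p, hp, rfl⟩
    obtain ⟨hp0, hps⟩ := h1 p hp
    refine ⟨?_, ?_, ?_⟩
    · simp [hΦ, hp0]
    · intro j hj
      set w0 := min (j * m) n with hw0
      set w1 := min ((j + 1) * m) n with hw1
      have hle : w0 ≤ w1 := by
        apply min_le_min _ le_rfl
        exact Nat.mul_le_mul_right m (Nat.le_succ j)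
      have hw1n : w1 ≤ n := min_le_right _ _
      have hdiff : w1 - w0 ≤ m := by
        have : (j + 1) * m = j * m + m := by ring
        omega
      have := dist_le_of_pseudo ⟨hp0, hps⟩ w0 w1 hle hw1n
      rw [Metric.mem_closedBall]
      calc dist (Φ p (j + 1)) (Φ p j) = dist (p w1) (p w0) := rfl
        _ = dist (p w0) (p w1) := dist_comm _ _
        _ ≤ ((w1 - w0 : ℕ) : ℝ) * δ := this
        _ ≤ (m : ℝ) * δ := by
            have : ((w1 - w0 : ℕ) : ℝ) ≤ (m : ℝ) := by exact_mod_cast hdiff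
            nlinarith
    · intro j hj
      rw [hK] at hj
      have h2' : n < (n / m + 1) * m := by
        have ha := Nat.div_add_mod n m
        have hb := Nat.mod_lt n hm
        have hx : (n / m + 1) * m = m * (n / m) + m := by ring
        omega
      have h3 : (n / m + 1) * m ≤ j * m := Nat.mul_le_mul_right m hj
      have h4 : (n / m + 1) * m ≤ (j + 1) * m := Nat.mul_le_mul_right m (by omega)
      have hj0 : min (j * m) n = n := min_eq_right (by omega)
      have hj1 : min ((j + 1) * m) n = n := min_eq_right (by omega)
      show p (min ((j + 1) * m) n) = p (min (j * m) n)
      rw [hj0, hj1]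
  have hchain := chain_upper x₀ (fun x => Metric.closedBall x (m * δ)) C' hC' K
  have hcard : S.encard ≤ (C' : ℕ∞) ^ K := by
    rw [← hinj.encard_image]
    exact le_trans (Set.encard_le_encard himg) hchain
  calc (S.encard : ℝ≥0∞) ≤ (((C' : ℕ∞) ^ K : ℕ∞) : ℝ≥0∞) := by
        exact_mod_cast ENat.toENNReal_le.mpr hcard
    _ = (C' : ℝ≥0∞) ^ K := by
        rw [ENat.toENNReal_pow]
        norm_cast

lemma sepCard_ge_of_blocks {X : Type*} [MetricSpace X] {δ R : ℝ} (hR : 0 < R)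
    (x₀ xc : X) (D : Set X) (hD : D.Finite)
    (hDsep : ∀ y ∈ D, ∀ z ∈ D, y ≠ z → R ≤ dist y z)
    (n₀ L : ℕ) (hL : 2 ≤ L)
    (pre : ℕ → X) (hpre0 : pre 0 = x₀)
    (hpres : ∀ i, dist (pre i) (pre (i + 1)) ≤ δ)
    (hpreE : ∀ i, n₀ ≤ i → pre i = xc)
    (out : X → ℕ → X)
    (hout0 : ∀ y, y ∈ D ∨ y = xc → out y 0 = xc)
    (houts : ∀ y, y ∈ D ∨ y = xc → ∀ i, dist (out y i) (out y (i + 1)) ≤ δ)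
    (houtE : ∀ y, y ∈ D ∨ y = xc → ∀ i, L ≤ i → out y i = y)
    (back : X → ℕ → X)
    (hback0 : ∀ y, y ∈ D ∨ y = xc → back y 0 = y)
    (hbacks : ∀ y, y ∈ D ∨ y = xc → ∀ i, dist (back y i) (back y (i + 1)) ≤ δ)
    (hbackE : ∀ y, y ∈ D ∨ y = xc → ∀ i, L ≤ i → back y i = xc)
    (k : ℕ) :
    ((D.encard ^ k : ℕ∞) : ℝ≥0∞) ≤ sepCard (id : X → X) (n₀ + 2 * L * k) R δ x₀ := by
  classical
  set n := n₀ + 2 * L * k with hn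
  set Y := {g : ℕ → X | (∀ j < k, g j ∈ D) ∧ ∀ j, k ≤ j → g j = xc} with hY
  obtain ⟨hYfin, hYcard⟩ := chain_lower D hD xc k
  set P : (ℕ → X) → ℕ → X := fun g i =>
    if i ≤ n₀ then pre i
    else if (i - n₀) % (2 * L) ≤ L then out (g ((i - n₀) / (2 * L))) ((i - n₀) % (2 * L))
    else back (g ((i - n₀) / (2 * L))) ((i - n₀) % (2 * L) - L) with hP
  have hLpos : 0 < 2 * L := by omega
  have hgmem : ∀ g ∈ Y, ∀ j : ℕ, g j ∈ D ∨ g j = xc := by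
    rintro g ⟨hg1, hg2⟩ j
    rcases lt_or_ge j k with hj | hj
    · exact Or.inl (hg1 j hj)
    · exact Or.inr (hg2 j hj)
  -- marker values
  have hmarker : ∀ g ∈ Y, ∀ j, j < k → P g (n₀ + (2 * L * j + L)) = g j := by
    intro g hg j hj
    have h1 : ¬ (n₀ + (2 * L * j + L) ≤ n₀) := by omega
    have ha : n₀ + (2 * L * j + L) - n₀ = 2 * L * j + L := by omega
    have hmod : (2 * L * j + L) % (2 * L) = L := by
      rw [Nat.mul_comm (2 * L) j, Nat.mul_add_mod' j (2 * L) L]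
      exact Nat.mod_eq_of_lt (by omega)
    have hdiv : (2 * L * j + L) / (2 * L) = j := by
      rw [Nat.mul_add_div hLpos]
      have : L / (2 * L) = 0 := Nat.div_eq_of_lt (by omega)
      omega
    simp only [hP]
    rw [if_neg h1, ha, hmod, hdiv, if_pos le_rfl]
    exact houtE (g j) (hgmem g hg j) L le_rfl
  -- step bounds
  have hstep : ∀ g ∈ Y, ∀ i : ℕ, dist (P g i) (P g (i + 1)) ≤ δ := by
    intro g hg i
    by_cases hi1 : i + 1 ≤ n₀
    · have hi0 : i ≤ n₀ := by omega
      simp only [hP]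
      rw [if_pos hi0, if_pos hi1]
      exact hpres i
    · by_cases hi0 : i ≤ n₀
      · -- i = n₀, first step into block 0
        have hii : i = n₀ := by omega
        have ha : i + 1 - n₀ = 1 := by omega
        have hmod : 1 % (2 * L) = 1 := Nat.mod_eq_of_lt (by omega)
        have hdiv : 1 / (2 * L) = 0 := Nat.div_eq_of_lt (by omega)
        simp only [hP]
        rw [if_pos hi0, if_neg (by omega : ¬ i + 1 ≤ n₀), ha, hmod, hdiv,
          if_pos (by omega : 1 ≤ L)]
        have h2 : pre i = xc := hpreE i (by omega)
        rw [h2, ← hout0 (g 0) (hgmem g hg 0)]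
        exact houts (g 0) (hgmem g hg 0) 0
      · -- i > n₀
        push_neg at hi0
        set a := i - n₀ with hadef
        have ha1 : 1 ≤ a := by omega
        have ha' : i + 1 - n₀ = a + 1 := by omega
        set r := a % (2 * L) with hrdef
        set j := a / (2 * L) with hjdef
        have hr2L : r < 2 * L := Nat.mod_lt _ hLpos
        have hdm : 2 * L * j + r = a := Nat.div_add_mod a (2 * L)
        have hyj := hgmem g hg j
        have hyj1 := hgmem g hg (j + 1)
        by_cases hc1 : r + 1 < 2 * L
        · -- same block
          have hmod : (a + 1) % (2 * L) = r + 1 := by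
            rw [← hdm, show 2 * L * j + r + 1 = (r + 1) + (2 * L) * j by ring,
              Nat.add_mul_mod_self_left]
            exact Nat.mod_eq_of_lt hc1
          have hdiv : (a + 1) / (2 * L) = j := by
            rw [← hdm, show 2 * L * j + r + 1 = (r + 1) + (2 * L) * j by ring,
              Nat.add_mul_div_left _ _ hLpos]
            have : (r + 1) / (2 * L) = 0 := Nat.div_eq_of_lt hc1
            omega
          by_cases hrL : r + 1 ≤ L
          · -- both in out
            simp only [hP]
            rw [if_neg (by omega : ¬ i ≤ n₀), if_neg (by omega : ¬ i + 1 ≤ n₀),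
              ← hadef, ha', hmod, hdiv, if_pos (by omega : r ≤ L), if_pos hrL]
            exact houts (g j) hyj r
          · by_cases hrL2 : r ≤ L
            · -- r = L : out to back transition
              have hrr : r = L := by omega
              simp only [hP]
              rw [if_neg (by omega : ¬ i ≤ n₀), if_neg (by omega : ¬ i + 1 ≤ n₀),
                ← hadef, ha', hmod, hdiv, if_pos hrL2, if_neg (by omega : ¬ r + 1 ≤ L)]
              have hb := hbacks (g j) hyj 0
              rw [hback0 (g j) hyj] at hb
              have e1 : out (g j) r = g j := by
                rw [hrr]; exact houtE (g j) hyj L le_rfl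
              show dist (out (g j) r) (back (g j) (r + 1 - L)) ≤ δ
              rw [e1, show r + 1 - L = 0 + 1 from by omega]
              exact hb
            · -- both in back
              push_neg at hrL2
              simp only [hP]
              rw [if_neg (by omega : ¬ i ≤ n₀), if_neg (by omega : ¬ i + 1 ≤ n₀),
                ← hadef, ha', hmod, hdiv, if_neg (by omega : ¬ r ≤ L),
                if_neg (by omega : ¬ r + 1 ≤ L)]
              show dist (back (g j) (r - L)) (back (g j) (r + 1 - L)) ≤ δ
              rw [show r + 1 - L = (r - L) + 1 from by omega]
              exact hbacks (g j) hyj (r - L)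
        · -- end of block : r = 2L - 1
          have hrr : r = 2 * L - 1 := by omega
          have haa : a + 1 = 2 * L * (j + 1) := by
            have hx : 2 * L * (j + 1) = 2 * L * j + 2 * L := by ring
            omega
          have hmod : (a + 1) % (2 * L) = 0 := by
            rw [haa, Nat.mul_mod_right]
          have hdiv : (a + 1) / (2 * L) = j + 1 := by
            rw [haa, Nat.mul_div_cancel_left _ hLpos]
          simp only [hP]
          rw [if_neg (by omega : ¬ i ≤ n₀), if_neg (by omega : ¬ i + 1 ≤ n₀),
            ← hadef, ha', hmod, hdiv, if_neg (by omega : ¬ r ≤ L),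
            if_pos (by omega : 0 ≤ L)]
          show dist (back (g j) (r - L)) (out (g (j + 1)) 0) ≤ δ
          rw [hout0 (g (j + 1)) hyj1]
          have e2 : xc = back (g j) (r - L + 1) := by
            rw [show r - L + 1 = L from by omega]
            exact (hbackE (g j) hyj L le_rfl).symm
          rw [e2]
          exact hbacks (g j) hyj (r - L)
  -- pseudo-orbit property
  have hpo : ∀ g ∈ Y, IsPseudoOrbit (id : X → X) δ n x₀ (P g) := by
    intro g hg
    constructor
    · simp only [hP]
      rw [if_pos (Nat.zero_le n₀)]
      exact hpre0
    · intro i _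
      simpa using hstep g hg i
  -- separation at markers
  have hsepkey : ∀ g ∈ Y, ∀ g' ∈ Y, g ≠ g' → ∃ i ≤ n, R ≤ dist (P g i) (P g' i) := by
    intro g hg g' hg' hne
    have : ∃ j, g j ≠ g' j := by
      by_contra hcon
      push_neg at hcon
      exact hne (funext hcon)
    obtain ⟨j, hj⟩ := this
    have hjk : j < k := by
      by_contra hjk
      push_neg at hjk
      rw [hg.2 j hjk, hg'.2 j hjk] at hj
      exact hj rfl
    refine ⟨n₀ + (2 * L * j + L), ?_, ?_⟩
    · have h1 : 2 * L * (j + 1) ≤ 2 * L * k :=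
        Nat.mul_le_mul_left (2 * L) (show j + 1 ≤ k by omega)
      have h2 : 2 * L * (j + 1) = 2 * L * j + 2 * L := by ring
      rw [hn]
      omega
    · rw [hmarker g hg j hjk, hmarker g' hg' j hjk]
      exact hDsep (g j) (hg.1 j hjk) (g' j) (hg'.1 j hjk) hj
  have hPinj : Set.InjOn P Y := by
    intro g hg g' hg' heq
    by_contra hne
    obtain ⟨i, -, hi⟩ := hsepkey g hg g' hg' hne
    rw [heq] at hi
    simp only [dist_self] at hi
    linarith
  set S : Set (ℕ → X) := P '' Y with hS
  have h1 : ∀ p ∈ S, IsPseudoOrbit (id : X → X) δ n x₀ p := by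
    rintro p ⟨g, hg, rfl⟩
    exact hpo g hg
  have h2 : IsSepFamily n R S := by
    rintro p ⟨g, hg, rfl⟩ q ⟨g', hg', rfl⟩ hpq
    have hne : g ≠ g' := fun h => hpq (by rw [h])
    obtain ⟨i, hin, hi⟩ := hsepkey g hg g' hg' hne
    refine le_trans hi ?_
    exact Finset.le_sup' (fun i => dist (P g i) (P g' i)) (Finset.mem_range.mpr (by omega))
  have hcard : S.encard = D.encard ^ k := by
    rw [hS, hPinj.encard_image, hYcard]
  rw [sepCard]
  refine le_iSup_of_le S (le_iSup_of_le h1 (le_iSup_of_le h2 ?_))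
  rw [hcard]

lemma partI {X : Type*} [MetricSpace X] (hbg : HasBoundedGeometry X)
    (hi : Filter.Tendsto
        (fun l : ℕ => elog (⨆ x : X, ((Metric.closedBall x (l : ℝ)).encard : ℝ≥0∞))
          / (l : ℝ≥0∞)) Filter.atTop (nhds 0))
    (x₀ : X) : coarseEntropyAt (id : X → X) x₀ = 0 := by
  refine le_antisymm ?_ (zero_le)
  rw [coarseEntropyAt]
  refine iSup_le fun δ => iSup_le fun hδ => ?_
  refine ENNReal.le_of_forall_pos_le_add fun ε hε _ => ?_
  rw [zero_add]
  set θ : ℝ := (ε : ℝ) with hθdef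
  have hθ : 0 < θ := by exact_mod_cast hε
  set ε'' : ℝ := θ / (4 * (δ + 2)) with hε''def
  have hε'' : 0 < ε'' := by positivity
  have hev : ∀ᶠ l : ℕ in atTop,
      elog (⨆ x : X, ((Metric.closedBall x (l : ℝ)).encard : ℝ≥0∞)) / (l : ℝ≥0∞)
        < ENNReal.ofReal ε'' :=
    hi.eventually_lt_const (by simpa using ENNReal.ofReal_pos.mpr hε'')
  obtain ⟨l₀, hl₀⟩ := eventually_atTop.mp hev
  set m : ℕ := ⌈(l₀ : ℝ) / δ⌉₊ + 1 with hmdef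
  have hm : 1 ≤ m := Nat.le_add_left 1 _
  have hm1 : (1 : ℝ) ≤ m := by exact_mod_cast hm
  set l : ℕ := max 1 ⌈(m : ℝ) * δ⌉₊ with hldef
  have hl1 : 1 ≤ l := le_max_left _ _
  have hl1' : (1 : ℝ) ≤ l := by exact_mod_cast hl1
  have hlmδ : (m : ℝ) * δ ≤ l := by
    have h1 : (m : ℝ) * δ ≤ ⌈(m : ℝ) * δ⌉₊ := Nat.le_ceil _
    have h2 : (⌈(m : ℝ) * δ⌉₊ : ℝ) ≤ l := by
      exact_mod_cast Nat.cast_le.mpr (le_max_right 1 _)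
    linarith
  have hlle : (l : ℝ) ≤ (m : ℝ) * δ + 2 := by
    have hmδ0 : 0 ≤ (m : ℝ) * δ := by positivity
    have h1 : (⌈(m : ℝ) * δ⌉₊ : ℝ) ≤ (m : ℝ) * δ + 1 := by
      have := Nat.ceil_lt_add_one hmδ0
      linarith
    have h2 : l = 1 ∨ l = ⌈(m : ℝ) * δ⌉₊ := by
      rw [hldef]
      rcases le_total 1 ⌈(m : ℝ) * δ⌉₊ with h | h
      · right; exact max_eq_right h
      · left; exact max_eq_left h
    rcases h2 with h2 | h2 <;> rw [h2]
    · simp only [Nat.cast_one]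
      linarith
    · linarith
  have hll₀ : l₀ ≤ l := by
    have h1 : (l₀ : ℝ) / δ ≤ ⌈(l₀ : ℝ) / δ⌉₊ := Nat.le_ceil _
    have h2 : (l₀ : ℝ) ≤ (m : ℝ) * δ := by
      rw [hmdef]
      push_cast
      rw [div_le_iff₀ hδ] at h1
      nlinarith
    have : (l₀ : ℝ) ≤ (l : ℝ) := le_trans h2 hlmδ
    exact_mod_cast this
  -- the optimal ball bound at radius l
  have hlpos : (0 : ℝ) < l := by linarith
  set Cset : Set ℕ := {c : ℕ | ∀ x : X, (Metric.closedBall x (l : ℝ)).encard ≤ c} with hCset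
  have hCne : Cset.Nonempty := by
    obtain ⟨c, hc⟩ := hbg l hlpos
    exact ⟨c, hc⟩
  set C' : ℕ := sInf Cset with hC'def
  have hC' : ∀ x : X, (Metric.closedBall x (l : ℝ)).encard ≤ C' := Nat.sInf_mem hCne
  have hC'1 : 1 ≤ C' := by
    have h1e : 1 ≤ (Metric.closedBall x₀ (l : ℝ)).encard :=
      Set.one_le_encard_iff_nonempty.mpr ⟨x₀, mem_closedBall_self (by positivity)⟩
    have := le_trans h1e (hC' x₀)
    exact_mod_cast this
  have hC'1' : (1 : ℝ) ≤ C' := by exact_mod_cast hC'1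
  set Sl : ℝ≥0∞ := ⨆ x : X, ((Metric.closedBall x (l : ℝ)).encard : ℝ≥0∞) with hSldef
  have hSlle : Sl ≤ (C' : ℝ≥0∞) := by
    refine iSup_le fun x => ?_
    have := hC' x
    exact_mod_cast ENat.toENNReal_le.mpr this
  have hSltop : Sl ≠ ⊤ := fun h => by
    rw [h] at hSlle
    exact (ENNReal.natCast_ne_top C') (top_le_iff.mp hSlle)
  have hC'Sl : (C' : ℝ≥0∞) ≤ Sl := by
    have hnm : C' - 1 ∉ Cset := Nat.notMem_of_lt_sInf (by omega)
    rw [hCset, Set.mem_setOf_eq] at hnm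
    push_neg at hnm
    obtain ⟨x, hx⟩ := hnm
    have hx' : (C' : ℕ∞) ≤ (Metric.closedBall x (l : ℝ)).encard := by
      have h1 : ((C' - 1 : ℕ) : ℕ∞) + 1 ≤ (Metric.closedBall x (l : ℝ)).encard :=
        Order.add_one_le_of_lt hx
      have h2 : ((C' - 1 : ℕ) : ℕ∞) + 1 = (C' : ℕ∞) := by
        have h3 : (C' - 1) + 1 = C' := by omega
        exact_mod_cast h3
      rwa [h2] at h1
    calc (C' : ℝ≥0∞) = (((C' : ℕ∞)) : ℝ≥0∞) := by norm_cast
      _ ≤ ((Metric.closedBall x (l : ℝ)).encard : ℝ≥0∞) := ENat.toENNReal_le.mpr hx'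
      _ ≤ Sl := le_iSup (fun x : X => ((Metric.closedBall x (l : ℝ)).encard : ℝ≥0∞)) x
  -- bound on log C'
  have hlogC' : Real.log C' ≤ ε'' * l := by
    have hFl := hl₀ l hll₀
    have hlne0 : ((l : ℕ) : ℝ≥0∞) ≠ 0 := by
      simp only [ne_eq, Nat.cast_eq_zero]
      omega
    have hlnetop : ((l : ℕ) : ℝ≥0∞) ≠ ⊤ := ENNReal.natCast_ne_top l
    rw [ENNReal.div_lt_iff (Or.inl hlne0) (Or.inl hlnetop)] at hFl
    have helog : elog Sl = ENNReal.ofReal (Real.log Sl.toReal) := by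
      rw [elog, if_neg hSltop]
    have hC'sl : (C' : ℝ) ≤ Sl.toReal := by
      have := ENNReal.toReal_mono hSltop hC'Sl
      simpa using this
    have h3 : ENNReal.ofReal (Real.log C') ≤ elog Sl := by
      rw [helog]
      exact ENNReal.ofReal_le_ofReal (Real.log_le_log (by linarith) hC'sl)
    have h4 : ENNReal.ofReal (Real.log C') < ENNReal.ofReal (ε'' * l) := by
      calc ENNReal.ofReal (Real.log C') ≤ elog Sl := h3
        _ < ENNReal.ofReal ε'' * l := hFl
        _ = ENNReal.ofReal (ε'' * l) := by
            rw [ENNReal.ofReal_mul hε''.le, ENNReal.ofReal_natCast]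
    have := (ENNReal.ofReal_lt_ofReal_iff_of_nonneg (Real.log_nonneg hC'1')).mp h4
    linarith
  have hlog0 : 0 ≤ Real.log C' := Real.log_nonneg hC'1'
  -- choose R
  set R : ℝ := 2 * m * δ + 1 with hRdef
  have hR : 0 < R := by positivity
  refine le_trans (iInf_le_of_le R (iInf_le_of_le hR le_rfl)) ?_
  -- bound the limsup
  have hCball : ∀ x : X, (Metric.closedBall x ((m : ℝ) * δ)).encard ≤ C' := fun x =>
    le_trans (Set.encard_le_encard (Metric.closedBall_subset_closedBall hlmδ)) (hC' x)
  have hbound : ∀ᶠ n : ℕ in atTop,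
      elog (sepCard (id : X → X) n R δ x₀) / (n : ℝ≥0∞)
        ≤ ENNReal.ofReal (2 * Real.log C' / m) := by
    rw [eventually_atTop]
    refine ⟨m, fun n hn => ?_⟩
    have hn1 : 1 ≤ n := le_trans hm hn
    have hnpos : (0 : ℝ) < n := by exact_mod_cast hn1
    set K := n / m + 1 with hKdef
    have h1 : elog (sepCard (id : X → X) n R δ x₀) ≤ ENNReal.ofReal (K * Real.log C') := by
      rw [← elog_natpow]
      exact elog_mono (sepCard_le x₀ δ hδ m hm C' hCball n)
    have h2 : elog (sepCard (id : X → X) n R δ x₀) / (n : ℝ≥0∞)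
        ≤ ENNReal.ofReal (K * Real.log C') / (n : ℝ≥0∞) :=
      ENNReal.div_le_div_right h1 _
    refine le_trans h2 ?_
    rw [← ENNReal.ofReal_natCast n, ← ENNReal.ofReal_div_of_pos hnpos]
    apply ENNReal.ofReal_le_ofReal
    rw [div_le_div_iff₀ hnpos (by linarith : (0:ℝ) < (m:ℝ))]
    have hKm : K * m ≤ 2 * n := by
      have h3 : (n / m) * m ≤ n := Nat.div_mul_le_self n m
      have h4 : K * m = (n / m) * m + m := by ring
      omega
    have hKm' : (K : ℝ) * m ≤ 2 * n := by exact_mod_cast hKm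
    nlinarith
  refine le_trans (Filter.limsup_le_of_le (by isBoundedDefault) hbound) ?_
  have hreal : 2 * Real.log C' / m ≤ θ := by
    have hεq : ε'' * (4 * (δ + 2)) = θ := by
      rw [hε''def]
      field_simp
    have h5 : 2 * Real.log C' ≤ 2 * (ε'' * l) := by linarith
    have h6 : 2 * (ε'' * l) ≤ 2 * ε'' * ((m : ℝ) * δ + 2) := by nlinarith
    have h7 : 2 * ε'' * ((m : ℝ) * δ + 2) ≤ θ * m := by nlinarith
    rw [div_le_iff₀ (by linarith : (0:ℝ) < (m:ℝ))]
    linarith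
  calc ENNReal.ofReal (2 * Real.log C' / m) ≤ ENNReal.ofReal θ :=
        ENNReal.ofReal_le_ofReal hreal
    _ = (ε : ℝ≥0∞) := ENNReal.ofReal_coe_nnreal

set_option maxHeartbeats 2000000 in
lemma partII {X : Type*} [MetricSpace X] (hqg : IsQuasiGeodesicSpace X)
    (hbg : HasBoundedGeometry X)
    (hpos : 0 < Filter.atTop.limsup
        fun l : ℕ => elog (⨆ x : X, ((Metric.closedBall x (l : ℝ)).encard : ℝ≥0∞))
          / (l : ℝ≥0∞))
    (x₀ : X) : coarseEntropyAt (id : X → X) x₀ = ⊤ := by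
  classical
  obtain ⟨C, A, hC, hA, hquasi⟩ := hqg
  set F := fun l : ℕ => elog (⨆ x : X, ((Metric.closedBall x (l : ℝ)).encard : ℝ≥0∞))
    / (l : ℝ≥0∞) with hF
  -- extract a positive exponential rate
  set c : ℝ≥0∞ := min (Filter.atTop.limsup F) 1 / 2 with hc
  have hmne : min (Filter.atTop.limsup F) 1 ≠ 0 :=
    (lt_min hpos zero_lt_one).ne'
  have hmnetop : min (Filter.atTop.limsup F) 1 ≠ ⊤ := by
    intro h
    have : min (Filter.atTop.limsup F) 1 ≤ 1 := min_le_right _ _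
    rw [h] at this
    exact absurd this (by simp)
  have hc0 : 0 < c := ENNReal.half_pos hmne
  have hctop : c ≠ ⊤ := by
    rw [hc]
    exact (ENNReal.div_lt_top hmnetop (by norm_num)).ne
  have hclt : c < Filter.atTop.limsup F :=
    lt_of_lt_of_le (ENNReal.half_lt_self hmne hmnetop) (min_le_left _ _)
  have hfreq0 : ∃ᶠ l : ℕ in atTop, c < F l :=
    Filter.frequently_lt_of_lt_limsup (by isBoundedDefault) hclt
  rw [Filter.frequently_atTop] at hfreq0
  set c₀ : ℝ := c.toReal with hc₀def
  have hc₀ : 0 < c₀ := ENNReal.toReal_pos hc0.ne' hctop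
  have hcofReal : c = ENNReal.ofReal c₀ := (ENNReal.ofReal_toReal hctop).symm
  clear_value c₀
  clear_value c
  -- the key estimate: for every W > 0 the entropy exceeds ofReal W
  have key : ∀ W : ℝ, 0 < W → ENNReal.ofReal W ≤ coarseEntropyAt (id : X → X) x₀ := by
    intro W hW
    set T : ℕ := ⌈4 * W / c₀⌉₊ + 1 with hTdef
    have hT : 1 ≤ T := Nat.le_add_left 1 _
    have hT1 : (1 : ℝ) ≤ T := by exact_mod_cast hT
    have hWT : W ≤ c₀ * T / 4 := by
      have h1 : 4 * W / c₀ ≤ ⌈4 * W / c₀⌉₊ := Nat.le_ceil _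
      have h2 : (⌈4 * W / c₀⌉₊ : ℝ) ≤ T := by
        rw [hTdef]; push_cast; linarith
      rw [div_le_iff₀ hc₀] at h1
      rw [le_div_iff₀ (by norm_num : (0:ℝ) < 4)]
      nlinarith
    clear_value T
    set δ : ℝ := T * (C + A) with hδdef
    have hδ : 0 < δ := by
      have : (0:ℝ) < C + A := by linarith
      positivity
    clear_value δ
    rw [coarseEntropyAt]
    refine le_iSup_of_le δ (le_iSup_of_le hδ ?_)
    refine le_iInf fun R => le_iInf fun hR => ?_
    -- now fix R > 0
    obtain ⟨CR, hCR⟩ := hbg R hR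
    have hCR1 : 1 ≤ CR := by
      have h1e : 1 ≤ (Metric.closedBall x₀ R).encard :=
        Set.one_le_encard_iff_nonempty.mpr ⟨x₀, mem_closedBall_self hR.le⟩
      exact_mod_cast le_trans h1e (hCR x₀)
    have hCR1' : (1:ℝ) ≤ CR := by exact_mod_cast hCR1
    have hlogCR : 0 ≤ Real.log CR := Real.log_nonneg hCR1'
    -- choose a large admissible radius l
    obtain ⟨l, hll₁, hlF⟩ := hfreq0 (max 1 ⌈(3 * Real.log CR + 4 * c₀ * T) / c₀⌉₊)
    have hl1 : 1 ≤ l := le_trans (le_max_left _ _) hll₁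
    have hl1' : (1:ℝ) ≤ l := by exact_mod_cast hl1
    have hlbig : 3 * Real.log CR + 4 * c₀ * T ≤ c₀ * l := by
      have h1 : ((⌈(3 * Real.log CR + 4 * c₀ * T) / c₀⌉₊ : ℕ) : ℝ) ≤ l := by
        exact_mod_cast le_trans (le_max_right 1 _) hll₁
      have h2 : (3 * Real.log CR + 4 * c₀ * T) / c₀ ≤ l :=
        le_trans (Nat.le_ceil _) h1
      rw [div_le_iff₀ hc₀] at h2
      linarith [h2]
    -- extract a big ball
    obtain ⟨Cl, hCl⟩ := hbg l (by positivity)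
    set Sl : ℝ≥0∞ := ⨆ x : X, ((Metric.closedBall x (l : ℝ)).encard : ℝ≥0∞) with hSldef
    have hSlle : Sl ≤ (Cl : ℝ≥0∞) :=
      iSup_le fun x => by exact_mod_cast ENat.toENNReal_le.mpr (hCl x)
    have hSltop : Sl ≠ ⊤ := fun h => by
      rw [h] at hSlle
      exact (ENNReal.natCast_ne_top Cl) (top_le_iff.mp hSlle)
    have hlne0 : ((l : ℕ) : ℝ≥0∞) ≠ 0 := by
      simp only [ne_eq, Nat.cast_eq_zero]; omega
    have hclSl : ENNReal.ofReal (c₀ * l) < elog Sl := by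
      have := hlF
      rw [hF] at this
      simp only at this
      rw [ENNReal.lt_div_iff_mul_lt (Or.inl hlne0) (Or.inl (ENNReal.natCast_ne_top l))] at this
      calc ENNReal.ofReal (c₀ * l) = c * l := by
            rw [hcofReal, ENNReal.ofReal_mul hc₀.le, ENNReal.ofReal_natCast]
        _ < elog Sl := this
    have hsl1 : 1 < Sl.toReal := by
      have helog : elog Sl = ENNReal.ofReal (Real.log Sl.toReal) := by
        rw [elog, if_neg hSltop]
      rw [helog] at hclSl
      have h1 : c₀ * l < Real.log Sl.toReal :=
        (ENNReal.ofReal_lt_ofReal_iff_of_nonneg (by positivity)).mp hclSl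
      by_contra hcon
      push_neg at hcon
      have := Real.log_nonpos (ENNReal.toReal_nonneg) hcon
      nlinarith
    have hexpsl : Real.exp (c₀ * l) < Sl.toReal := by
      have helog : elog Sl = ENNReal.ofReal (Real.log Sl.toReal) := by
        rw [elog, if_neg hSltop]
      rw [helog] at hclSl
      have h1 : c₀ * l < Real.log Sl.toReal :=
        (ENNReal.ofReal_lt_ofReal_iff_of_nonneg (by positivity)).mp hclSl
      calc Real.exp (c₀ * l) < Real.exp (Real.log Sl.toReal) := Real.exp_lt_exp.mpr h1
        _ = Sl.toReal := Real.exp_log (by linarith)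
    have hball : ∃ x : X, ENNReal.ofReal (Real.exp (c₀ * l))
        < ((Metric.closedBall x (l : ℝ)).encard : ℝ≥0∞) := by
      rw [← lt_iSup_iff (f := fun x : X => ((Metric.closedBall x (l : ℝ)).encard : ℝ≥0∞))]
      calc ENNReal.ofReal (Real.exp (c₀ * l)) < ENNReal.ofReal Sl.toReal :=
            (ENNReal.ofReal_lt_ofReal_iff (by linarith)).mpr hexpsl
        _ = Sl := ENNReal.ofReal_toReal hSltop
    obtain ⟨xc, hxc⟩ := hball
    -- net inside the ball
    have hballfin : (Metric.closedBall xc (l : ℝ)).Finite := by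
      rw [← Set.encard_ne_top_iff]
      intro h
      have := hCl xc
      rw [h] at this
      exact absurd (top_le_iff.mp this) (by simp)
    obtain ⟨D, hDsub, hDfin, hDsep, hDcov⟩ := exists_net _ hballfin R hR
    -- counting: the ball is covered by CR-balls around D
    have hcount : (Metric.closedBall xc (l : ℝ)).encard ≤ D.encard * CR := by
      have hchoice : ∀ a : X, a ∈ Metric.closedBall xc (l : ℝ) → ∃ y, y ∈ D ∧ dist a y ≤ R := by
        intro a ha
        obtain ⟨y, hy1, hy2⟩ := hDcov a ha
        exact ⟨y, hy1, hy2⟩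
      set φ : X → X × X := fun a =>
        (if h : a ∈ Metric.closedBall xc (l : ℝ) then (hchoice a h).choose else a, a) with hφ
      have hinj : Set.InjOn φ (Metric.closedBall xc (l : ℝ)) := by
        intro a ha b hb heq
        simpa [hφ] using congrArg Prod.snd heq
      have himg : φ '' (Metric.closedBall xc (l : ℝ)) ⊆
          {z : X × X | z.1 ∈ D ∧ z.2 ∈ Metric.closedBall z.1 R} := by
        rintro z ⟨a, ha, rfl⟩
        obtain ⟨hy1, hy2⟩ := (hchoice a ha).choose_spec
        constructor
        · simp only [hφ, ha, dif_pos]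
          exact hy1
        · simp only [hφ, ha, dif_pos]
          exact hy2
      calc (Metric.closedBall xc (l : ℝ)).encard = (φ '' (Metric.closedBall xc (l : ℝ))).encard :=
            (hinj.encard_image).symm
        _ ≤ {z : X × X | z.1 ∈ D ∧ z.2 ∈ Metric.closedBall z.1 R}.encard :=
            Set.encard_le_encard himg
        _ ≤ D.encard * CR := encard_depProd_le D (fun y => Metric.closedBall y R) CR
            (fun y _ => hCR y)
    set M : ℕ := hDfin.toFinset.card with hMdef
    have hMcard : D.encard = (M : ℕ∞) := hDfin.encard_eq_coe_toFinset_card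
    clear_value M
    have hMreal : Real.exp (c₀ * l) ≤ (M : ℝ) * CR := by
      have h1 : ENNReal.ofReal (Real.exp (c₀ * l)) ≤ ((M : ℝ≥0∞) * CR) := by
        calc ENNReal.ofReal (Real.exp (c₀ * l))
            ≤ ((Metric.closedBall xc (l : ℝ)).encard : ℝ≥0∞) := hxc.le
          _ ≤ ((D.encard * CR : ℕ∞) : ℝ≥0∞) := ENat.toENNReal_le.mpr hcount
          _ = (M : ℝ≥0∞) * CR := by
              rw [ENat.toENNReal_mul, hMcard]
              norm_cast
      have h2 : ((M : ℝ≥0∞) * CR) = ENNReal.ofReal ((M : ℝ) * CR) := by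
        rw [ENNReal.ofReal_mul (by positivity)]
        rw [ENNReal.ofReal_natCast, ENNReal.ofReal_natCast]
      rw [h2] at h1
      exact (ENNReal.ofReal_le_ofReal_iff (by positivity)).mp h1
    have hM1 : 1 ≤ M := by
      rcases Nat.eq_zero_or_pos M with h | h
      · rw [h] at hMreal
        simp only [Nat.cast_zero, zero_mul] at hMreal
        linarith [Real.exp_pos (c₀ * (l:ℝ))]
      · exact h
    have hM1' : (1:ℝ) ≤ M := by exact_mod_cast hM1
    set β : ℝ := Real.log M with hβdef
    have hβlb : c₀ * l - Real.log CR ≤ β := by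
      have h1 : Real.exp (c₀ * l) / CR ≤ M := by
        rw [div_le_iff₀ (by linarith : (0:ℝ) < CR)]
        linarith
      have h2 : Real.log (Real.exp (c₀ * l) / CR) ≤ β := by
        rw [hβdef]
        exact Real.log_le_log (by positivity) h1
      rw [Real.log_div (Real.exp_ne_zero _) (by linarith : (CR:ℝ) ≠ 0), Real.log_exp] at h2
      exact h2
    have hβpos : 0 < β := by nlinarith
    clear_value β
    -- block length
    set L : ℕ := ⌈(l : ℝ) / T⌉₊ + 1 with hLdef
    have hL2 : 2 ≤ L := by
      have : 1 ≤ ⌈(l : ℝ) / T⌉₊ := Nat.one_le_iff_ne_zero.mpr (by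
        simp only [ne_eq, Nat.ceil_eq_zero, not_le]
        positivity)
      omega
    have hLub : (L : ℝ) ≤ (l : ℝ) / T + 2 := by
      have h1 := Nat.ceil_lt_add_one (by positivity : (0:ℝ) ≤ (l : ℝ) / T)
      rw [hLdef]
      push_cast
      linarith
    -- paths
    obtain ⟨pre, hpre0, hpres, hpreE⟩ := exists_stepPath hC hA x₀ xc (hquasi x₀ xc) T hT
    have hout' : ∀ y : X, ∃ q : ℕ → X, q 0 = xc ∧ (∀ i, dist (q i) (q (i + 1)) ≤ T * (C + A)) ∧
        ∀ i, ⌈dist xc y / T⌉₊ ≤ i → q i = y := fun y => exists_stepPath hC hA xc y (hquasi xc y) T hT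
    choose out hout0 houts houtE' using hout'
    have hback' : ∀ y : X, ∃ q : ℕ → X, q 0 = y ∧ (∀ i, dist (q i) (q (i + 1)) ≤ T * (C + A)) ∧
        ∀ i, ⌈dist y xc / T⌉₊ ≤ i → q i = xc := fun y => exists_stepPath hC hA y xc (hquasi y xc) T hT
    choose back hback0 hbacks hbackE' using hback'
    have hmemball : ∀ y : X, y ∈ D ∨ y = xc → dist xc y ≤ l := by
      intro y hy
      rcases hy with hy | rfl
      · have := hDsub hy
        rw [Metric.mem_closedBall] at this
        rw [dist_comm]
        exact this
      · simp
    have hT0 : (0:ℝ) < T := by linarith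
    have hceilL : ∀ y : X, y ∈ D ∨ y = xc → ⌈dist xc y / T⌉₊ ≤ L := by
      intro y hy
      have h1 : dist xc y / T ≤ (l : ℝ) / T := by
        gcongr
        exact hmemball y hy
      calc ⌈dist xc y / T⌉₊ ≤ ⌈(l : ℝ) / T⌉₊ := Nat.ceil_le_ceil h1
        _ ≤ L := by omega
    have hceilL' : ∀ y : X, y ∈ D ∨ y = xc → ⌈dist y xc / T⌉₊ ≤ L := by
      intro y hy
      rw [dist_comm]
      exact hceilL y hy
    clear_value L
    have houtEL : ∀ y, y ∈ D ∨ y = xc → ∀ i, L ≤ i → out y i = y :=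
      fun y hy i hi => houtE' y i (le_trans (hceilL y hy) hi)
    have hbackEL : ∀ y, y ∈ D ∨ y = xc → ∀ i, L ≤ i → back y i = xc :=
      fun y hy i hi => hbackE' y i (le_trans (hceilL' y hy) hi)
    set n₀ : ℕ := ⌈dist x₀ xc / T⌉₊ with hn₀def
    clear_value n₀
    have hpres' : ∀ i, dist (pre i) (pre (i + 1)) ≤ δ := fun i => by
      rw [hδdef]; exact hpres i
    have houts' : ∀ y, y ∈ D ∨ y = xc → ∀ i, dist (out y i) (out y (i + 1)) ≤ δ :=
      fun y _ i => by rw [hδdef]; exact houts y i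
    have hbacks' : ∀ y, y ∈ D ∨ y = xc → ∀ i, dist (back y i) (back y (i + 1)) ≤ δ :=
      fun y _ i => by rw [hδdef]; exact hbacks y i
    have hout0' : ∀ y, y ∈ D ∨ y = xc → out y 0 = xc := fun y _ => hout0 y
    have hback0' : ∀ y, y ∈ D ∨ y = xc → back y 0 = y := fun y _ => hback0 y
    -- the limsup lower bound
    refine le_trans (ENNReal.ofReal_le_ofReal hWT) ?_
    refine Filter.le_limsup_of_frequently_le ?_ (by isBoundedDefault)
    rw [Filter.frequently_atTop]
    intro N
    set K₁ : ℕ := ⌈(n₀ : ℝ) * c₀ * T / β⌉₊ + 1 with hK₁def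
    have hK₁ub : (n₀ : ℝ) * c₀ * T / β ≤ K₁ := by
      have h0 := Nat.le_ceil ((n₀ : ℝ) * c₀ * T / β)
      have h2 : (⌈(n₀ : ℝ) * c₀ * T / β⌉₊ : ℝ) ≤ K₁ := by
        rw [hK₁def]; push_cast; linarith
      linarith
    clear_value K₁
    set k : ℕ := max N K₁ with hkdef
    have hkK₁ : K₁ ≤ k := le_max_right _ _
    have hkN : N ≤ k := le_max_left _ _
    have hk1 : 1 ≤ k := by omega
    clear_value k
    set n : ℕ := n₀ + 2 * L * k with hndef
    have hkn : k ≤ 2 * L * k := Nat.le_mul_of_pos_left k (by omega)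
    have hnN : N ≤ n := by omega
    have hn1 : 1 ≤ n := by omega
    have hncast : (n : ℝ) = (n₀ : ℝ) + 2 * (L : ℝ) * k := by
      rw [hndef]; push_cast; ring
    clear_value n
    refine ⟨n, hnN, ?_⟩
    have hnpos : (0:ℝ) < n := by exact_mod_cast hn1
    have hsep := sepCard_ge_of_blocks hR x₀ xc D hDfin hDsep n₀ L hL2 pre hpre0 hpres'
      (fun i hi => hpreE i hi) out hout0' houts' houtEL back hback0' hbacks' hbackEL k
    have hcast : ((D.encard ^ k : ℕ∞) : ℝ≥0∞) = (M : ℝ≥0∞) ^ k := by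
      rw [hMcard]
      rw [ENat.toENNReal_pow]
      norm_cast
    rw [hcast, ← hndef] at hsep
    have h2 : ENNReal.ofReal (k * β) ≤ elog (sepCard (id : X → X) n R δ x₀) := by
      rw [hβdef, ← elog_natpow M k]
      exact elog_mono hsep
    have h3 : ENNReal.ofReal (k * β) / (n : ℝ≥0∞)
        ≤ elog (sepCard (id : X → X) n R δ x₀) / (n : ℝ≥0∞) :=
      ENNReal.div_le_div_right h2 _
    have h4 : ENNReal.ofReal (k * β) / (n : ℝ≥0∞) = ENNReal.ofReal (k * β / n) := by
      rw [ENNReal.ofReal_div_of_pos hnpos, ENNReal.ofReal_natCast]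
    -- the real computation
    have hkβ1 : (n₀ : ℝ) * c₀ * T ≤ k * β := by
      have h6 : (K₁ : ℝ) ≤ k := by exact_mod_cast hkK₁
      rw [div_le_iff₀ hβpos] at hK₁ub
      have h7 : (K₁ : ℝ) * β ≤ (k : ℝ) * β := mul_le_mul_of_nonneg_right h6 hβpos.le
      linarith
    have hTl : (T : ℝ) * ((l : ℝ) / (T : ℝ)) = (l : ℝ) := by
      rw [mul_comm]
      exact div_mul_cancel₀ _ (ne_of_gt hT0)
    have e1 : 2 * c₀ * T * ((l:ℝ) / T) = 2 * c₀ * l := by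
      calc 2 * c₀ * (T : ℝ) * ((l:ℝ) / T) = 2 * c₀ * ((T : ℝ) * ((l:ℝ) / T)) := by ring
        _ = 2 * c₀ * l := by rw [hTl]
    have h3β : 2 * c₀ * T * (L : ℝ) ≤ 3 * β := by
      have h8 : 2 * c₀ * T * (L : ℝ) ≤ 2 * c₀ * T * ((l:ℝ) / T + 2) :=
        mul_le_mul_of_nonneg_left hLub (by positivity)
      have h9 : 2 * c₀ * T * ((l:ℝ) / T + 2) = 2 * c₀ * l + 4 * c₀ * T := by
        rw [mul_add, e1]; ring
      nlinarith
    have hreal : c₀ * T / 4 ≤ k * β / n := by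
      rw [div_le_div_iff₀ (by norm_num : (0:ℝ) < 4) hnpos]
      have h10 : 2 * c₀ * T * (L : ℝ) * k ≤ 3 * β * k :=
        mul_le_mul_of_nonneg_right h3β (by positivity)
      rw [hncast]
      have hc₀T : 0 < c₀ * T := by positivity
      nlinarith
    calc ENNReal.ofReal (c₀ * T / 4) ≤ ENNReal.ofReal (k * β / n) :=
          ENNReal.ofReal_le_ofReal hreal
      _ = ENNReal.ofReal (k * β) / (n : ℝ≥0∞) := h4.symm
      _ ≤ _ := h3
  -- conclude
  by_contra hne
  have hlt : coarseEntropyAt (id : X → X) x₀ < ⊤ := lt_top_iff_ne_top.mpr hne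
  set E := coarseEntropyAt (id : X → X) x₀ with hE
  have h1 := key (E.toReal + 1) (by positivity)
  have h2 : E = ENNReal.ofReal E.toReal := (ENNReal.ofReal_toReal hne).symm
  have h3 : ENNReal.ofReal E.toReal < ENNReal.ofReal (E.toReal + 1) :=
    (ENNReal.ofReal_lt_ofReal_iff (by positivity)).mpr (by linarith)
  rw [← h2] at h3
  exact absurd (lt_of_lt_of_le h3 h1) (lt_irrefl _)


/-- Let `X` be a quasigeodesic metric space of bounded geometry. Then:
(i) if `lim_{l→∞} (1/l) log (sup_x |B(x,l)|) = 0`, then `h_∞(X) = 0`;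
(ii) if `limsup_{l→∞} (1/l) log (sup_x |B(x,l)|) > 0`, then `h_∞(X) = ∞`. -/
theorem coarseEntropy_dichotomy_quasiGeodesic_boundedGeometry {X : Type*} [MetricSpace X]
    (hqg : IsQuasiGeodesicSpace X) (hbg : HasBoundedGeometry X) :
    ((Filter.Tendsto
        (fun l : ℕ => elog (⨆ x : X, ((Metric.closedBall x (l : ℝ)).encard : ℝ≥0∞))
          / (l : ℝ≥0∞)) Filter.atTop (nhds 0)) →
      ∀ x₀ : X, coarseEntropyAt (id : X → X) x₀ = 0) ∧
    ((0 < Filter.atTop.limsup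
        fun l : ℕ => elog (⨆ x : X, ((Metric.closedBall x (l : ℝ)).encard : ℝ≥0∞))
          / (l : ℝ≥0∞)) →
      ∀ x₀ : X, coarseEntropyAt (id : X → X) x₀ = ⊤) := by
  exact ⟨fun hi x₀ => partI hbg hi x₀, fun hpos x₀ => partII hqg hbg hpos x₀⟩
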